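/- Let V be a finite-dimensional vector space over a field and let D be an endomorphism of V. Since D maps range(D^{2i}) into range(D^{2i+1}) and range(D^{2i+1}) into range(D^{2i+2}), D induces a linear map D̄_i : range(D^{2i})/range(D^{2i+1}) → range(D^{2i+1})/range(D^{2i+2}) for each i ≥ 0. Then Σ_{i≥0} dim ker(D̄_i) = Σ_{k≥0} dim H^k(V,D), as natural numbers, with only finitely many nonzero terms on each side. (Second expression for the total higher Dirac cohomology in Remark 5.8.) -/
import Mathlib


open LinearMap Module

section

variable {𝕜 V : Type*} [Field 𝕜] [AddCommGroup V] [Module 𝕜 V]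

/-- `D` maps `range D^n` into `range D^{n+1}`. -/
theorem apply_mem_range_pow_succ (D : Module.End 𝕜 V) (n : ℕ) :
    ∀ x ∈ range (D ^ n), D x ∈ range (D ^ (n + 1)) := by
  rintro x ⟨y, rfl⟩
  exact ⟨y, by rw [pow_succ']; rfl⟩

/-- The map `D̄_n : range D^n / range D^{n+1} → range D^{n+1} / range D^{n+2}`
induced by `D`. -/
noncomputable def inducedQuotientMap (D : Module.End 𝕜 V) (n : ℕ) :
    (↥(range (D ^ n)) ⧸
        Submodule.comap (range (D ^ n)).subtype (range (D ^ (n + 1)))) →ₗ[𝕜]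
      (↥(range (D ^ (n + 1))) ⧸
        Submodule.comap (range (D ^ (n + 1))).subtype (range (D ^ (n + 2)))) :=
  Submodule.mapQ _ _ (D.restrict (apply_mem_range_pow_succ D n)) (by
    intro x hx
    simp only [Submodule.mem_comap, LinearMap.restrict_apply, Submodule.coe_subtype] at hx ⊢
    exact apply_mem_range_pow_succ D (n + 1) _ hx)

theorem range_pow_succ_le' (D : Module.End 𝕜 V) (n : ℕ) :
    range (D ^ (n + 1)) ≤ range (D ^ n) := by
  rintro x ⟨y, rfl⟩
  exact ⟨D y, by rw [pow_succ]; rfl⟩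

theorem rankA' [FiniteDimensional 𝕜 V] (D : Module.End 𝕜 V) (n : ℕ) :
    finrank 𝕜 ↥(range (D ^ n) ⊓ ker D) + finrank 𝕜 ↥(range (D ^ (n + 1)))
      = finrank 𝕜 ↥(range (D ^ n)) := by
  set p := range (D ^ n)
  have h1 := LinearMap.finrank_range_add_finrank_ker (D ∘ₗ p.subtype)
  have hr : range (D ∘ₗ p.subtype) = range (D ^ (n + 1)) := by
    rw [range_comp, Submodule.range_subtype, pow_succ', Module.End.mul_eq_comp, range_comp]
  have hk : ker (D ∘ₗ p.subtype) = Submodule.comap p.subtype (p ⊓ ker D) := by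
    rw [ker_comp, Submodule.comap_inf, Submodule.comap_subtype_self, top_inf_eq]
  have hke : finrank 𝕜 ↥(ker (D ∘ₗ p.subtype)) = finrank 𝕜 ↥(p ⊓ ker D) := by
    rw [hk]
    exact (Submodule.comapSubtypeEquivOfLe inf_le_left).finrank_eq
  rw [hr, hke] at h1
  omega

theorem rankQ' [FiniteDimensional 𝕜 V] {p q : Submodule 𝕜 V} (h : q ≤ p) :
    finrank 𝕜 (↥p ⧸ Submodule.comap p.subtype q) + finrank 𝕜 ↥q = finrank 𝕜 ↥p := by
  have h1 := Submodule.finrank_quotient_add_finrank (Submodule.comap p.subtype q)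
  rwa [(Submodule.comapSubtypeEquivOfLe h).finrank_eq] at h1

theorem surj' (D : Module.End 𝕜 V) (n : ℕ) :
    Function.Surjective (inducedQuotientMap D n) := by
  intro z
  obtain ⟨⟨w, hw⟩, rfl⟩ := Submodule.mkQ_surjective _ z
  obtain ⟨y, rfl⟩ := hw
  refine ⟨Submodule.mkQ _ ⟨(D ^ n) y, ⟨y, rfl⟩⟩, ?_⟩
  rw [inducedQuotientMap, Submodule.mkQ_apply, Submodule.mapQ_apply]
  congr 1
  ext
  simp [LinearMap.restrict_apply, pow_succ', Module.End.mul_eq_comp]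

theorem key' [FiniteDimensional 𝕜 V] (D : Module.End 𝕜 V) (n : ℕ) :
    finrank 𝕜 ↥(ker (inducedQuotientMap D n)) =
      finrank 𝕜
        (↥(range (D ^ n) ⊓ ker D) ⧸
          Submodule.comap (range (D ^ n) ⊓ ker D).subtype
            (range (D ^ (n + 1)) ⊓ ker D)) := by
  have hA := rankA' D n
  have hA1 : finrank 𝕜 ↥(range (D ^ (n + 1)) ⊓ ker D) + finrank 𝕜 ↥(range (D ^ (n + 2)))
      = finrank 𝕜 ↥(range (D ^ (n + 1))) := rankA' D (n + 1)
  have hQ := rankQ' (𝕜 := 𝕜) (range_pow_succ_le' D n)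
  have hQ1 : finrank 𝕜 (↥(range (D ^ (n + 1))) ⧸
        Submodule.comap (range (D ^ (n + 1))).subtype (range (D ^ (n + 2))))
      + finrank 𝕜 ↥(range (D ^ (n + 2))) = finrank 𝕜 ↥(range (D ^ (n + 1))) :=
    rankQ' (𝕜 := 𝕜) (range_pow_succ_le' D (n + 1))
  have hH := rankQ' (𝕜 := 𝕜) (p := range (D ^ n) ⊓ ker D) (q := range (D ^ (n + 1)) ⊓ ker D)
    (inf_le_inf_right _ (range_pow_succ_le' D n))
  have hrn := LinearMap.finrank_range_add_finrank_ker (inducedQuotientMap D n)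
  have htop : range (inducedQuotientMap D n) = ⊤ := range_eq_top.2 (surj' D n)
  rw [htop, finrank_top] at hrn
  omega

/-- Remark 5.8, second expression. -/
theorem stmt15 [FiniteDimensional 𝕜 V] (D : Module.End 𝕜 V) :
    ∑ᶠ i : ℕ, finrank 𝕜 ↥(ker (inducedQuotientMap D (2 * i))) =
      ∑ᶠ k : ℕ, finrank 𝕜
        (↥(range (D ^ (2 * k)) ⊓ ker D) ⧸
          Submodule.comap (range (D ^ (2 * k)) ⊓ ker D).subtype
            (range (D ^ (2 * k + 1)) ⊓ ker D)) := by
  exact finsum_congr fun k => key' D (2 * k)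

end
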